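/- Let α be a partially ordered set and let f, g : ℤ → α be strictly antitone maps (k < l implies f(l) < f(k)) with the same range. Then there exists a unique integer c such that g(k) = f(k + c) for all k ∈ ℤ. -/

import Mathlib

/-- Two strictly antitone maps `ℤ → α` with the same range differ by a unique
translation. -/
theorem stmt_10 {α : Type*} [PartialOrder α] (f g : ℤ → α)
    (hf : StrictAnti f) (hg : StrictAnti g) (hr : Set.range f = Set.range g) :
    ∃! c : ℤ, ∀ k : ℤ, g k = f (k + c) := by
  have hs : ∀ k : ℤ, ∃ m : ℤ, f m = g k := by
    intro k
    have : g k ∈ Set.range f := hr ▸ Set.mem_range_self k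
    exact this
  choose h hh using hs
  have hmono : StrictMono h := by
    intro a b hab
    have hlt : g b < g a := hg hab
    rw [← hh a, ← hh b] at hlt
    exact hf.lt_iff_gt.mp hlt
  have hsurj : Function.Surjective h := by
    intro m
    have : f m ∈ Set.range g := hr ▸ Set.mem_range_self m
    obtain ⟨k, hk⟩ := this
    exact ⟨k, hf.injective (by rw [hh, hk])⟩
  have hstep : ∀ k : ℤ, h (k + 1) = h k + 1 := by
    intro k
    have hle : h k + 1 ≤ h (k + 1) := Int.add_one_le_iff.mpr (hmono (lt_add_one k))
    obtain ⟨j, hj⟩ := hsurj (h k + 1)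
    have hkj : k < j := hmono.lt_iff_lt.mp (by rw [hj]; exact lt_add_one _)
    have : h (k + 1) ≤ h j := hmono.monotone (Int.add_one_le_iff.mpr hkj)
    omega
  have hlin : ∀ k : ℤ, h k = k + h 0 := by
    intro k
    induction k using Int.induction_on with
    | zero => simp
    | succ n ih => rw [hstep]; omega
    | pred n ih =>
      have := hstep (-(n : ℤ) - 1)
      simp only [sub_add_cancel] at this
      omega
  refine ⟨h 0, fun k => ?_, fun c hc => ?_⟩
  · rw [← hh k, hlin k]
  · have h1 : g 0 = f (0 + c) := hc 0
    rw [← hh 0] at h1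
    have := hf.injective h1
    omega
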